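/- arXiv:2202.13411 — 3 statements merged into one kernel-verified Lean document; each statement's English description precedes it below -/
import Mathlib

section
/- (Range identity under norm equivalence.) Let X, V, H be Hilbert spaces, Q : X → H and S : X → V bounded linear operators such that there exist constants c, C > 0 with c‖Sx‖_V ≤ ‖Qx‖_H ≤ C‖Sx‖_V for all x ∈ X. Then Range(Q*) = Range(S*). -/
open scoped InnerProductSpace
open Filter Topology

open ContinuousLinearMap in
lemma range_adjoint_subset_of_norm_le
    {X V H : Type*}
    [NormedAddCommGroup X] [InnerProductSpace ℂ X] [CompleteSpace X]
    [NormedAddCommGroup V] [InnerProductSpace ℂ V] [CompleteSpace V]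
    [NormedAddCommGroup H] [InnerProductSpace ℂ H] [CompleteSpace H]
    (Q : X →L[ℂ] H) (S : X →L[ℂ] V)
    (C : ℝ) (hC : 0 ≤ C)
    (hb : ∀ x : X, ‖Q x‖ ≤ C * ‖S x‖) :
    Set.range Q.adjoint ⊆ Set.range S.adjoint := by
  rintro _ ⟨h, rfl⟩
  have hQS : ∀ x y : X, S x = S y → Q x = Q y := by
    intro x y hxy
    have h1 : S (x - y) = 0 := by simp [map_sub, hxy]
    have h2 : ‖Q (x - y)‖ ≤ 0 := by
      have := hb (x - y)
      rwa [h1, norm_zero, mul_zero] at this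
    have h3 : Q (x - y) = 0 := norm_le_zero_iff.mp h2
    have := sub_eq_zero.mp (by simpa [map_sub] using h3)
    exact this
  set p : Submodule ℂ V := LinearMap.range (S : X →ₗ[ℂ] V) with hp
  have hmem : ∀ v : p, ∃ x : X, S x = (v : V) := fun v => v.2
  let φ : p → ℂ := fun v => ⟪h, Q ((hmem v).choose)⟫_ℂ
  have hφ : ∀ (v : p) (x : X), S x = (v : V) → φ v = ⟪h, Q x⟫_ℂ := by
    intro v x hx
    have : Q ((hmem v).choose) = Q x := hQS _ _ ((hmem v).choose_spec.trans hx.symm)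
    simp only [φ, this]
  let f : p →ₗ[ℂ] ℂ :=
    { toFun := φ
      map_add' := by
        intro v w
        obtain ⟨x, hx⟩ := hmem v
        obtain ⟨y, hy⟩ := hmem w
        have hvw : S (x + y) = ((v + w : p) : V) := by
          simp [map_add, hx, hy]
        rw [hφ _ _ hvw, hφ _ _ hx, hφ _ _ hy, map_add, inner_add_right]
      map_smul' := by
        intro a v
        obtain ⟨x, hx⟩ := hmem v
        have hav : S (a • x) = ((a • v : p) : V) := by
          simp [map_smul, hx]
        show φ (a • v) = a • φ v
        rw [hφ _ _ hav, hφ _ _ hx, map_smul, inner_smul_right, smul_eq_mul] }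
  have hbound' : ∀ v : p, ‖f v‖ ≤ (‖h‖ * C) * ‖v‖ := by
    intro v
    obtain ⟨x, hx⟩ := hmem v
    have : f v = ⟪h, Q x⟫_ℂ := hφ _ _ hx
    rw [this]
    calc ‖⟪h, Q x⟫_ℂ‖ ≤ ‖h‖ * ‖Q x‖ := norm_inner_le_norm _ _
      _ ≤ ‖h‖ * (C * ‖S x‖) := by
          exact mul_le_mul_of_nonneg_left (hb x) (norm_nonneg h)
      _ = (‖h‖ * C) * ‖v‖ := by
          have : ‖(v : V)‖ = ‖v‖ := rfl
          rw [← mul_assoc, hx, this]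
  let fc : p →L[ℂ] ℂ := f.mkContinuous (‖h‖ * C) hbound'
  obtain ⟨g, hg, -⟩ := exists_extension_norm_eq p fc
  let w : V := (InnerProductSpace.toDual ℂ V).symm g
  refine ⟨w, ?_⟩
  apply ext_inner_right ℂ
  intro x
  rw [adjoint_inner_left, adjoint_inner_left]
  have hsx : (S x) ∈ p := ⟨x, rfl⟩
  have h1 : ⟪w, S x⟫_ℂ = g (S x) := InnerProductSpace.toDual_symm_apply
  have h2 : g (S x) = fc ⟨S x, hsx⟩ := hg ⟨S x, hsx⟩
  have h3 : fc ⟨S x, hsx⟩ = ⟪h, Q x⟫_ℂ := hφ ⟨S x, hsx⟩ x rfl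
  rw [h1, h2, h3]

/-- Range identity: if `c‖Sx‖ ≤ ‖Qx‖ ≤ C‖Sx‖` for all `x`, then `Range(Q*) = Range(S*)`. -/
theorem stmt7
    {X V H : Type*}
    [NormedAddCommGroup X] [InnerProductSpace ℂ X] [CompleteSpace X]
    [NormedAddCommGroup V] [InnerProductSpace ℂ V] [CompleteSpace V]
    [NormedAddCommGroup H] [InnerProductSpace ℂ H] [CompleteSpace H]
    (Q : X →L[ℂ] H) (S : X →L[ℂ] V)
    (c C : ℝ) (hc : 0 < c) (hC : 0 < C)
    (hbound : ∀ x : X, c * ‖S x‖ ≤ ‖Q x‖ ∧ ‖Q x‖ ≤ C * ‖S x‖) :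
    Set.range Q.adjoint = Set.range S.adjoint := by
  apply Set.Subset.antisymm
  · exact range_adjoint_subset_of_norm_le Q S C hC.le fun x => (hbound x).2
  · refine range_adjoint_subset_of_norm_le S Q (1 / c) (by positivity) fun x => ?_
    have := (hbound x).1
    rw [div_mul_eq_mul_div, le_div_iff₀ hc, one_mul, mul_comm]
    exact this
end

section
/- (Regularized factorization method, abstract form.) Let A : H → H be compact, self-adjoint, positive and injective on a separable Hilbert space with eigenpairs (λ_n, x_n), and φ an admissible filter function (pointwise limit 1 as α → 0, uniformly bounded). Then for ℓ ∈ H: ℓ ∈ Range(A^{1/2}) if and only if liminf_{α→0} Σ_n (φ(λ_n; α)²/λ_n)|(x_n, ℓ)|² < ∞. -/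
open scoped InnerProductSpace ENNReal
open Filter Topology

/-- Regularized factorization method, abstract form:
`ℓ ∈ Range(A^{1/2})` iff `liminf_{α→0} ∑ (φ(λ_n;α)²/λ_n)|(x_n,ℓ)|² < ∞`. -/
theorem stmt9
    {H : Type*} [NormedAddCommGroup H] [InnerProductSpace ℂ H] [CompleteSpace H]
    (A sqrtA : H →L[ℂ] H)
    (hAcomp : IsCompactOperator A) (hAsa : IsSelfAdjoint A)
    (hApos : ∀ x : H, 0 ≤ (⟪x, A x⟫_ℂ).re) (hAinj : Function.Injective A)
    (b : HilbertBasis ℕ ℂ H) (lam : ℕ → ℝ) (lam1 : ℝ)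
    (hpos : ∀ n, 0 < lam n) (hmono : Antitone lam)
    (hlim : Tendsto lam atTop (𝓝 0)) (hlam1 : lam 0 = lam1)
    (heig : ∀ n, A (b n) = (lam n : ℂ) • b n)
    (hsqrt : ∀ n, sqrtA (b n) = ((Real.sqrt (lam n) : ℂ)) • b n)
    (phi : ℝ → ℝ → ℝ) (Creg : ℝ)
    (hphi_nonneg : ∀ t ∈ Set.Ioc (0:ℝ) lam1, ∀ α > (0:ℝ), 0 ≤ phi t α)
    (hphi_bd : ∀ t ∈ Set.Ioc (0:ℝ) lam1, ∀ α > (0:ℝ), phi t α ≤ Creg)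
    (hphi_lim : ∀ t ∈ Set.Ioc (0:ℝ) lam1, Tendsto (fun α => phi t α) (𝓝[>] 0) (𝓝 1))
    (ℓ : H) :
    ℓ ∈ Set.range sqrtA ↔
      liminf (fun α => ∑' n, ENNReal.ofReal
          ((phi (lam n) α) ^ 2 / lam n * ‖⟪b n, ℓ⟫_ℂ‖ ^ 2)) (𝓝[>] 0) < ⊤ := by
  have hmem : ∀ n, lam n ∈ Set.Ioc (0:ℝ) lam1 := fun n =>
    ⟨hpos n, hlam1 ▸ hmono (Nat.zero_le n)⟩
  have hsqrt_pos : ∀ n, (0:ℝ) < Real.sqrt (lam n) := fun n => Real.sqrt_pos.2 (hpos n)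
  constructor
  · rintro ⟨x, rfl⟩
    -- inner product formula
    have hInner : ∀ n, ⟪b n, sqrtA x⟫_ℂ = (b.repr x n) * (Real.sqrt (lam n) : ℂ) := by
      intro n
      have h2 := ((b.hasSum_repr x).mapL sqrtA).mapL (innerSL ℂ (b n))
      have h3 : ∀ i, i ≠ n →
          (innerSL ℂ (b n)) (sqrtA (b.repr x i • b i)) = 0 := by
        intro i hi
        rw [map_smul, hsqrt i]
        simp [inner_smul_right, orthonormal_iff_ite.mp b.orthonormal n i, Ne.symm hi]
      have h4 := (hasSum_single (f := fun i =>
        (innerSL ℂ (b n)) (sqrtA (b.repr x i • b i))) n h3).unique h2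
      have h5 : (innerSL ℂ (b n)) (sqrtA (b.repr x n • b n))
          = (b.repr x n) * (Real.sqrt (lam n) : ℂ) := by
        rw [map_smul, hsqrt n]
        simp [inner_smul_right, orthonormal_iff_ite.mp b.orthonormal n n, b.orthonormal.1 n]
      rw [← innerSL_apply_apply, ← h4, h5]
    have hnorm : ∀ n, ‖⟪b n, sqrtA x⟫_ℂ‖ ^ 2 = lam n * ‖b.repr x n‖ ^ 2 := by
      intro n
      rw [hInner n, norm_mul, mul_pow, Complex.norm_real, Real.norm_eq_abs,
        abs_of_nonneg (hsqrt_pos n).le, Real.sq_sqrt (hpos n).le]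
      ring
    have hsumm : Summable fun n => Creg ^ 2 * ‖b.repr x n‖ ^ 2 := by
      have := b.orthonormal.inner_products_summable (x := x)
      simp only [← b.repr_apply_apply] at this
      exact this.mul_left _
    set M := ENNReal.ofReal (∑' n, Creg ^ 2 * ‖b.repr x n‖ ^ 2) with hM
    have hbd : ∀ᶠ α in 𝓝[>] (0:ℝ),
        (∑' n, ENNReal.ofReal
          ((phi (lam n) α) ^ 2 / lam n * ‖⟪b n, sqrtA x⟫_ℂ‖ ^ 2)) ≤ M := by
      filter_upwards [eventually_mem_nhdsWithin] with α (hα : (0:ℝ) < α)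
      have hle : ∀ n, (phi (lam n) α) ^ 2 / lam n * ‖⟪b n, sqrtA x⟫_ℂ‖ ^ 2
          ≤ Creg ^ 2 * ‖b.repr x n‖ ^ 2 := by
        intro n
        rw [hnorm n]
        have h1 : (phi (lam n) α) ^ 2 / lam n * (lam n * ‖b.repr x n‖ ^ 2)
            = (phi (lam n) α) ^ 2 * ‖b.repr x n‖ ^ 2 := by
          rw [div_mul_eq_mul_div, mul_comm (lam n), ← mul_assoc, mul_div_assoc,
            div_self (hpos n).ne', mul_one]
        rw [h1]
        exact mul_le_mul_of_nonneg_right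
          (pow_le_pow_left₀ (hphi_nonneg _ (hmem n) α hα) (hphi_bd _ (hmem n) α hα) 2)
          (sq_nonneg _)
      calc (∑' n, ENNReal.ofReal
            ((phi (lam n) α) ^ 2 / lam n * ‖⟪b n, sqrtA x⟫_ℂ‖ ^ 2))
          ≤ ∑' n, ENNReal.ofReal (Creg ^ 2 * ‖b.repr x n‖ ^ 2) :=
            ENNReal.tsum_le_tsum fun n => ENNReal.ofReal_le_ofReal (hle n)
        _ = M := by
            rw [hM, ENNReal.ofReal_tsum_of_nonneg
              (fun n => mul_nonneg (sq_nonneg _) (sq_nonneg _)) hsumm]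
    have hlim_le : liminf (fun α => ∑' n, ENNReal.ofReal
          ((phi (lam n) α) ^ 2 / lam n * ‖⟪b n, sqrtA x⟫_ℂ‖ ^ 2)) (𝓝[>] (0:ℝ)) ≤ M :=
      le_trans (Filter.liminf_le_liminf hbd) (le_of_eq (liminf_const M))
    exact lt_of_le_of_lt hlim_le ENNReal.ofReal_lt_top
  · intro hfin
    set S : ℝ → ℝ≥0∞ := fun α => ∑' n, ENNReal.ofReal
        ((phi (lam n) α) ^ 2 / lam n * ‖⟪b n, ℓ⟫_ℂ‖ ^ 2) with hS
    set M : ℝ≥0∞ := liminf S (𝓝[>] (0:ℝ)) + 1 with hMdef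
    have hMlt : M < ⊤ := ENNReal.add_lt_top.2 ⟨hfin, ENNReal.one_lt_top⟩
    have hfreq : ∃ᶠ α in 𝓝[>] (0:ℝ), S α < M :=
      frequently_lt_of_liminf_lt (h := ENNReal.lt_add_right hfin.ne one_ne_zero)
    -- every finite partial sum of the Picard series is ≤ M
    have hpartial : ∀ s : Finset ℕ,
        (∑ n ∈ s, ENNReal.ofReal (‖⟪b n, ℓ⟫_ℂ‖ ^ 2 / lam n)) ≤ M := by
      intro s
      set F : ℝ → ℝ≥0∞ := fun α => ∑ n ∈ s, ENNReal.ofReal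
          ((phi (lam n) α) ^ 2 / lam n * ‖⟪b n, ℓ⟫_ℂ‖ ^ 2) with hF
      have hFlim : Tendsto F (𝓝[>] (0:ℝ))
          (𝓝 (∑ n ∈ s, ENNReal.ofReal (‖⟪b n, ℓ⟫_ℂ‖ ^ 2 / lam n))) := by
        apply tendsto_finset_sum
        intro n _
        have h1 : Tendsto (fun α => (phi (lam n) α) ^ 2 / lam n * ‖⟪b n, ℓ⟫_ℂ‖ ^ 2)
            (𝓝[>] (0:ℝ)) (𝓝 ((1:ℝ) ^ 2 / lam n * ‖⟪b n, ℓ⟫_ℂ‖ ^ 2)) :=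
          (((hphi_lim _ (hmem n)).pow 2).div_const _).mul_const _
        have h2 : (1:ℝ) ^ 2 / lam n * ‖⟪b n, ℓ⟫_ℂ‖ ^ 2 = ‖⟪b n, ℓ⟫_ℂ‖ ^ 2 / lam n := by
          ring
        rw [h2] at h1
        exact (ENNReal.continuous_ofReal.tendsto _).comp h1
      have hFfreq : ∃ᶠ α in 𝓝[>] (0:ℝ), F α < M :=
        hfreq.mono fun α hα => lt_of_le_of_lt (ENNReal.sum_le_tsum s) hα
      by_contra hcon
      push_neg at hcon
      have hev : ∀ᶠ α in 𝓝[>] (0:ℝ), M < F α := hFlim.eventually_const_lt hcon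
      rcases (hev.and_frequently hFfreq).exists with ⟨α, h1, h2⟩
      exact absurd h1 (not_lt.2 h2.le)
    have htsum : (∑' n, ENNReal.ofReal (‖⟪b n, ℓ⟫_ℂ‖ ^ 2 / lam n)) ≤ M := by
      rw [ENNReal.tsum_eq_iSup_sum]
      exact iSup_le hpartial
    have htop : (∑' n, ENNReal.ofReal (‖⟪b n, ℓ⟫_ℂ‖ ^ 2 / lam n)) ≠ ⊤ :=
      (lt_of_le_of_lt htsum hMlt).ne
    have hsummable : Summable fun n => ‖⟪b n, ℓ⟫_ℂ‖ ^ 2 / lam n := by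
      have := ENNReal.summable_toReal htop
      refine this.congr fun n => ?_
      rw [ENNReal.toReal_ofReal (div_nonneg (sq_nonneg _) (hpos n).le)]
    -- build the preimage
    set f : ℕ → ℂ := fun n => ⟪b n, ℓ⟫_ℂ / (Real.sqrt (lam n) : ℂ) with hf
    have hfnorm : ∀ n, ‖f n‖ ^ 2 = ‖⟪b n, ℓ⟫_ℂ‖ ^ 2 / lam n := by
      intro n
      rw [hf]
      simp only [norm_div, Complex.norm_real, Real.norm_eq_abs,
        abs_of_nonneg (hsqrt_pos n).le]
      rw [div_pow, Real.sq_sqrt (hpos n).le]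
    have hmemlp : Memℓp f 2 := by
      apply memℓp_gen
      have h2 : ((2:ℝ≥0∞).toReal) = (2:ℝ) := by norm_num
      rw [h2]
      have : Summable fun n => ‖f n‖ ^ (2:ℕ) :=
        hsummable.congr fun n => (hfnorm n).symm
      refine this.congr fun n => ?_
      rw [← Real.rpow_natCast ‖f n‖ 2]
      norm_num
    set x : H := b.repr.symm (⟨f, hmemlp⟩ : lp (fun _ : ℕ => ℂ) 2) with hx
    have hxrepr : ∀ n, b.repr x n = f n := by
      intro n
      rw [hx, LinearIsometryEquiv.apply_symm_apply]
    refine ⟨x, ?_⟩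
    have h1 := (b.hasSum_repr x).mapL sqrtA
    have h2 : ∀ i, sqrtA (b.repr x i • b i) = (⟪b i, ℓ⟫_ℂ) • b i := by
      intro i
      rw [map_smul, hsqrt i, hxrepr i, hf, smul_smul, div_mul_cancel₀]
      exact Complex.ofReal_ne_zero.mpr (hsqrt_pos i).ne'
    rw [funext h2] at h1
    have h3 : HasSum (fun i => (⟪b i, ℓ⟫_ℂ) • b i) ℓ := by
      have := b.hasSum_repr ℓ
      simp only [b.repr_apply_apply] at this
      exact this
    exact h1.unique h3
end

section
/- Suppose A : X → X is a positive compact self-adjoint injective operator on a Hilbert space X with A = S*TS, where S : X → V is compact and injective, and T : V → V is bounded, self-adjoint, positive, and strictly coercive on Range(S). Then Range(A^{1/2}) = Range(S*). -/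
open scoped InnerProductSpace
open Filter Topology

set_option maxHeartbeats 1000000 in
theorem douglas_half
    {H₁ H₂ H₃ : Type*}
    [NormedAddCommGroup H₁] [InnerProductSpace ℂ H₁] [CompleteSpace H₁]
    [NormedAddCommGroup H₂] [InnerProductSpace ℂ H₂] [CompleteSpace H₂]
    [NormedAddCommGroup H₃] [InnerProductSpace ℂ H₃] [CompleteSpace H₃]
    (A : H₁ →L[ℂ] H₃) (B : H₂ →L[ℂ] H₃) (c : ℝ)
    (h : ∀ x : H₃, ‖A.adjoint x‖ ≤ c * ‖B.adjoint x‖) :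
    Set.range A ⊆ Set.range B := by
  classical
  have hker : LinearMap.ker (B.adjoint : H₃ →ₗ[ℂ] H₂)
      ≤ LinearMap.ker (A.adjoint : H₃ →ₗ[ℂ] H₁) := by
    intro x hx
    have hx' : B.adjoint x = 0 := hx
    have h2 : ‖A.adjoint x‖ ≤ c * ‖B.adjoint x‖ := h x
    rw [hx', norm_zero, mul_zero] at h2
    exact norm_le_zero_iff.mp h2
  let B' : H₃ →ₗ[ℂ] H₂ := (B.adjoint : H₃ →ₗ[ℂ] H₂)
  let fR : LinearMap.range B' →ₗ[ℂ] H₁ :=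
    (LinearMap.ker B').liftQ (A.adjoint : H₃ →ₗ[ℂ] H₁) hker ∘ₗ
      (B'.quotKerEquivRange).symm.toLinearMap
  have hfR_apply : ∀ x : H₃, fR ⟨B.adjoint x, LinearMap.mem_range_self B' x⟩ = A.adjoint x := by
    intro x
    have h1 : B'.quotKerEquivRange (Submodule.Quotient.mk x)
        = ⟨B.adjoint x, LinearMap.mem_range_self B' x⟩ :=
      Subtype.ext (LinearMap.quotKerEquivRange_apply_mk B' x)
    show ((LinearMap.ker B').liftQ (A.adjoint : H₃ →ₗ[ℂ] H₁) hker)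
      ((B'.quotKerEquivRange).symm ⟨B.adjoint x, LinearMap.mem_range_self B' x⟩) = A.adjoint x
    rw [← h1, LinearEquiv.symm_apply_apply, Submodule.liftQ_apply]
    rfl
  have hbound : ∀ v : LinearMap.range B', ‖fR v‖ ≤ c * ‖v‖ := by
    rintro ⟨v, hv⟩
    obtain ⟨x, rfl⟩ := hv
    have hv2 : (⟨B' x, LinearMap.mem_range_self B' x⟩ : LinearMap.range B')
        = ⟨B.adjoint x, LinearMap.mem_range_self B' x⟩ := rfl
    rw [hv2, hfR_apply x]
    exact h x
  let F : LinearMap.range B' →L[ℂ] H₁ := fR.mkContinuous c hbound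
  have hF_apply : ∀ v, F v = fR v := fun v => rfl
  let R : Submodule ℂ H₂ := LinearMap.range B'
  let Rc : Submodule ℂ H₂ := R.topologicalClosure
  haveI : CompleteSpace Rc := IsClosed.completeSpace_coe (hs := R.isClosed_topologicalClosure)
  let e₀ : R →ₗ[ℂ] Rc := Submodule.inclusion R.le_topologicalClosure
  have he₀_norm : ∀ v : R, ‖e₀ v‖ = ‖v‖ := fun v => rfl
  let e : R →L[ℂ] Rc :=
    e₀.mkContinuous 1 (fun v => le_of_eq (by rw [he₀_norm v, one_mul]))
  have he_norm : ∀ v : R, ‖e v‖ = ‖v‖ := fun v => he₀_norm v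
  have h_iso : Isometry e := AddMonoidHomClass.isometry_of_norm e he_norm
  have h_ui : IsUniformInducing e := h_iso.isUniformInducing
  have h_dense : DenseRange e := by
    intro y
    rw [closure_subtype]
    have himg : (Subtype.val '' Set.range e) = (R : Set H₂) := by
      ext v
      constructor
      · rintro ⟨w, ⟨u, rfl⟩, rfl⟩
        exact u.2
      · intro hv
        exact ⟨e ⟨v, hv⟩, ⟨⟨v, hv⟩, rfl⟩, rfl⟩
    rw [himg]
    have h2 := y.2
    rwa [← SetLike.mem_coe, Submodule.topologicalClosure_coe] at h2
  let G : Rc →L[ℂ] H₁ := F.extend e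
  let P : H₂ →L[ℂ] Rc := Submodule.orthogonalProjectionOnto Rc
  let E : H₂ →L[ℂ] H₁ := G ∘L P
  have hkey : ∀ x : H₃, E (B.adjoint x) = A.adjoint x := by
    intro x
    have hmem : B.adjoint x ∈ Rc := R.le_topologicalClosure (LinearMap.mem_range_self B' x)
    have hP1 : P (B.adjoint x) = ⟨B.adjoint x, hmem⟩ :=
      Submodule.orthogonalProjectionOnto_mem_subspace_eq_self (⟨B.adjoint x, hmem⟩ : Rc)
    have he1 : e ⟨B.adjoint x, LinearMap.mem_range_self B' x⟩ = ⟨B.adjoint x, hmem⟩ := rfl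
    show G (P (B.adjoint x)) = A.adjoint x
    rw [hP1, ← he1]
    rw [show G (e ⟨B.adjoint x, LinearMap.mem_range_self B' x⟩)
        = F ⟨B.adjoint x, LinearMap.mem_range_self B' x⟩ from
      ContinuousLinearMap.extend_eq F h_dense h_ui _]
    rw [hF_apply]
    exact hfR_apply x
  have hadj : A.adjoint = E ∘L B.adjoint := by
    ext x
    exact (hkey x).symm
  have hcomp : A = B ∘L E.adjoint := by
    have h3 := congrArg ContinuousLinearMap.adjoint hadj
    rwa [ContinuousLinearMap.adjoint_adjoint, ContinuousLinearMap.adjoint_comp,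
      ContinuousLinearMap.adjoint_adjoint] at h3
  rintro _ ⟨x, rfl⟩
  exact ⟨E.adjoint x, by rw [hcomp]; rfl⟩

/-- Range identity for the factorization `A = S*TS`: `Range(A^{1/2}) = Range(S*)`. -/
theorem stmt17
    {X V : Type*}
    [NormedAddCommGroup X] [InnerProductSpace ℂ X] [CompleteSpace X]
    [NormedAddCommGroup V] [InnerProductSpace ℂ V] [CompleteSpace V]
    (A sqrtA : X →L[ℂ] X) (S : X →L[ℂ] V) (T : V →L[ℂ] V)
    (hAcomp : IsCompactOperator A) (hAsa : IsSelfAdjoint A)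
    (hApos : ∀ x : X, 0 ≤ (⟪x, A x⟫_ℂ).re) (hAinj : Function.Injective A)
    (hScomp : IsCompactOperator S) (hSinj : Function.Injective S)
    (hTsa : IsSelfAdjoint T) (hTpos : ∀ v : V, 0 ≤ (⟪v, T v⟫_ℂ).re)
    (β : ℝ) (hβ : 0 < β)
    (hcoer : ∀ x : X, β * ‖S x‖ ^ 2 ≤ (⟪S x, T (S x)⟫_ℂ).re)
    (hfac : A = S.adjoint.comp (T.comp S))
    (hsqrt_sa : IsSelfAdjoint sqrtA)
    (hsqrt_pos : ∀ x : X, 0 ≤ (⟪x, sqrtA x⟫_ℂ).re)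
    (hsqrt : sqrtA.comp sqrtA = A) :
    Set.range sqrtA = Set.range S.adjoint := by
  have hQadj : ContinuousLinearMap.adjoint sqrtA = sqrtA :=
    ContinuousLinearMap.isSelfAdjoint_iff'.mp hsqrt_sa
  have hnorm : ∀ x : X, ‖sqrtA x‖ ^ 2 = (⟪S x, T (S x)⟫_ℂ).re := by
    intro x
    have h1 : (⟪sqrtA x, sqrtA x⟫_ℂ) = ⟪x, A x⟫_ℂ := by
      have h0 := ContinuousLinearMap.adjoint_inner_right sqrtA x (sqrtA x)
      rw [hQadj] at h0
      rw [← h0, ← hsqrt]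
      rfl
    have h2 : (⟪x, A x⟫_ℂ) = ⟪S x, T (S x)⟫_ℂ := by
      rw [hfac]
      have h0 := ContinuousLinearMap.adjoint_inner_right S x (T (S x))
      rw [← h0]
      rfl
    rw [← inner_self_eq_norm_sq (𝕜 := ℂ), h1, h2]
    simp [RCLike.re_to_complex]
  have h_upper : ∀ x : X, ‖sqrtA x‖ ≤ Real.sqrt ‖T‖ * ‖S x‖ := by
    intro x
    have h1 : ‖sqrtA x‖ ^ 2 ≤ ‖T‖ * ‖S x‖ ^ 2 := by
      rw [hnorm x]
      have hstep : (⟪S x, T (S x)⟫_ℂ).re ≤ ‖S x‖ * ‖T (S x)‖ := by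
        have h5 := re_inner_le_norm (𝕜 := ℂ) (S x) (T (S x))
        simpa [RCLike.re_to_complex] using h5
      calc (⟪S x, T (S x)⟫_ℂ).re ≤ ‖S x‖ * ‖T (S x)‖ := hstep
      _ ≤ ‖S x‖ * (‖T‖ * ‖S x‖) := by
          exact mul_le_mul_of_nonneg_left (T.le_opNorm (S x)) (norm_nonneg _)
      _ = ‖T‖ * ‖S x‖ ^ 2 := by ring
    have h2 := Real.sqrt_le_sqrt h1
    rwa [Real.sqrt_sq (norm_nonneg _), Real.sqrt_mul (norm_nonneg T),
      Real.sqrt_sq (norm_nonneg _)] at h2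
  have h_lower : ∀ x : X, ‖S x‖ ≤ (Real.sqrt β)⁻¹ * ‖sqrtA x‖ := by
    intro x
    have h1 : β * ‖S x‖ ^ 2 ≤ ‖sqrtA x‖ ^ 2 := by rw [hnorm x]; exact hcoer x
    have h2 := Real.sqrt_le_sqrt h1
    rw [Real.sqrt_mul hβ.le, Real.sqrt_sq (norm_nonneg _), Real.sqrt_sq (norm_nonneg _)] at h2
    have h3 : ‖S x‖ ≤ ‖sqrtA x‖ / Real.sqrt β :=
      (le_div_iff₀' (Real.sqrt_pos.mpr hβ)).mpr h2
    calc ‖S x‖ ≤ ‖sqrtA x‖ / Real.sqrt β := h3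
    _ = (Real.sqrt β)⁻¹ * ‖sqrtA x‖ := by rw [div_eq_inv_mul]
  apply Set.Subset.antisymm
  · apply douglas_half sqrtA S.adjoint (Real.sqrt ‖T‖)
    intro x
    rw [hQadj, ContinuousLinearMap.adjoint_adjoint]
    exact h_upper x
  · apply douglas_half S.adjoint sqrtA ((Real.sqrt β)⁻¹)
    intro x
    rw [hQadj, ContinuousLinearMap.adjoint_adjoint]
    exact h_lower x
end
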